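/- Let α > 1/2 and k ≥ 2α + 1 an integer. Then ∏_{i=1}^{k-1} 1/(1 - (i/k)^{2α}) > k/(2α+1). -/

import Mathlib

open Finset Real

lemma one_add_sum_le_prod_one_add (s : Finset ℕ) (f : ℕ → ℝ) (h : ∀ i ∈ s, 0 ≤ f i) :
    1 + ∑ i ∈ s, f i ≤ ∏ i ∈ s, (1 + f i) := by
  classical
  induction s using Finset.cons_induction with
  | empty => simp
  | cons a s ha ih =>
    rw [Finset.sum_cons, Finset.prod_cons]
    have hfa : 0 ≤ f a := h a (Finset.mem_cons_self a s)
    have hsum : 0 ≤ ∑ i ∈ s, f i :=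
      Finset.sum_nonneg fun i hi => h i (Finset.mem_cons_of_mem hi)
    have ih' := ih fun i hi => h i (Finset.mem_cons_of_mem hi)
    calc 1 + (f a + ∑ i ∈ s, f i) ≤ (1 + f a) * (1 + ∑ i ∈ s, f i) := by nlinarith
    _ ≤ (1 + f a) * ∏ i ∈ s, (1 + f i) := by
        apply mul_le_mul_of_nonneg_left ih' (by linarith)

/-- For `α > 1/2` and integer `k ≥ 2α + 1`,
`∏_{i=1}^{k-1} 1/(1 - (i/k)^{2α}) > k/(2α+1)`. -/
theorem stmt9 (α : ℝ) (hα : 1 / 2 < α) (k : ℕ) (hk : 2 * α + 1 ≤ (k : ℝ)) :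
    (k : ℝ) / (2 * α + 1) <
      ∏ i ∈ Finset.Icc 1 (k - 1), 1 / (1 - ((i : ℝ) / k) ^ (2 * α)) := by
  have hp1 : (1 : ℝ) ≤ 2 * α + 1 := by linarith
  have hp0 : (0 : ℝ) < 2 * α + 1 := by linarith
  have hk3 : 3 ≤ k := by
    by_contra h
    interval_cases k <;> push_cast at hk <;> linarith
  have hkpos : (0 : ℝ) < k := by positivity
  -- basic facts about x_i := (i/k)^(2α) for 1 ≤ i ≤ k-1
  have hxpos : ∀ i ∈ Finset.Icc 1 (k - 1), 0 < ((i : ℝ) / k) ^ (2 * α) := by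
    intro i hi
    rw [Finset.mem_Icc] at hi
    have : (0 : ℝ) < (i : ℝ) / k := by
      apply div_pos _ hkpos
      exact_mod_cast Nat.lt_of_lt_of_le Nat.zero_lt_one hi.1
    positivity
  have hxlt1 : ∀ i ∈ Finset.Icc 1 (k - 1), ((i : ℝ) / k) ^ (2 * α) < 1 := by
    intro i hi
    rw [Finset.mem_Icc] at hi
    apply Real.rpow_lt_one (by positivity)
    · rw [div_lt_one hkpos]
      have : i < k := by omega
      exact_mod_cast this
    · linarith
  have hne : (Finset.Icc 1 (k - 1)).Nonempty := by
    rw [Finset.nonempty_Icc]; omega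
  -- Step 1: product of 1/(1-x) > product of (1+x)
  have step1 : ∏ i ∈ Finset.Icc 1 (k - 1), (1 + ((i : ℝ) / k) ^ (2 * α)) <
      ∏ i ∈ Finset.Icc 1 (k - 1), 1 / (1 - ((i : ℝ) / k) ^ (2 * α)) := by
    apply Finset.prod_lt_prod_of_nonempty _ _ hne
    · intro i hi
      have := hxpos i hi
      linarith
    · intro i hi
      have hx0 := hxpos i hi
      have hx1 := hxlt1 i hi
      rw [lt_div_iff₀ (by linarith)]
      nlinarith
  -- Step 2: 1 + sum ≤ product of (1+x)
  have step2 := one_add_sum_le_prod_one_add (Finset.Icc 1 (k - 1))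
      (fun i => ((i : ℝ) / k) ^ (2 * α)) (fun i hi => (hxpos i hi).le)
  -- Step 3: telescoping lower bound on the sum
  -- pointwise: ((i+1)/k)^(2α+1) - (i/k)^(2α+1) ≤ (2α+1) * ((i+1)/k)^(2α) / k
  have key : ∀ i : ℕ, (((i : ℝ) + 1) / k) ^ (2 * α + 1) - ((i : ℝ) / k) ^ (2 * α + 1)
      ≤ (2 * α + 1) * (((i : ℝ) + 1) / k) ^ (2 * α) / k := by
    intro i
    set a : ℝ := ((i : ℝ) + 1) / k with ha
    have ha0 : 0 < a := by positivity
    have hii : (0:ℝ) < (i:ℝ) + 1 := by positivity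
    -- Bernoulli with s = -1/(i+1): (1 - 1/(i+1))^(2α+1) ≥ 1 - (2α+1)/(i+1)
    have hb := one_add_mul_self_le_rpow_one_add (s := -(1 / ((i : ℝ) + 1)))
      (by rw [neg_le, neg_neg]; rw [div_le_one hii]; linarith) hp1
    have heq : (1 : ℝ) + -(1 / ((i : ℝ) + 1)) = (i : ℝ) / ((i : ℝ) + 1) := by
      field_simp
      ring
    rw [heq] at hb
    have hsplit : ((i : ℝ) / k) = a * ((i : ℝ) / ((i : ℝ) + 1)) := by
      rw [ha]; field_simp
    have hmono : a ^ (2 * α + 1) * (1 + (2 * α + 1) * -(1 / ((i : ℝ) + 1)))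
        ≤ ((i : ℝ) / k) ^ (2 * α + 1) := by
      rw [hsplit, Real.mul_rpow ha0.le (by positivity)]
      exact mul_le_mul_of_nonneg_left hb (by positivity)
    have hap : a ^ (2 * α + 1) = a ^ (2 * α) * a := by
      rw [Real.rpow_add ha0, Real.rpow_one]
    have haa : a ^ (2 * α + 1) * (1 / ((i : ℝ) + 1)) = a ^ (2 * α) / k := by
      rw [hap, ha]
      field_simp
    have hrw : a ^ (2 * α + 1) * (1 + (2 * α + 1) * -(1 / ((i : ℝ) + 1)))
        = a ^ (2 * α + 1) - (2 * α + 1) * a ^ (2 * α) / k := by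
      have : (2 * α + 1) * a ^ (2 * α) / k = (2 * α + 1) * (a ^ (2 * α) / k) := by ring
      rw [this, ← haa]; ring
    rw [hrw] at hmono
    linarith
  -- telescoping sum
  have htel : ∑ i ∈ Finset.range (k - 1),
      ((((i : ℝ) + 1) / k) ^ (2 * α + 1) - ((i : ℝ) / k) ^ (2 * α + 1))
      = (((k : ℝ) - 1) / k) ^ (2 * α + 1) := by
    have hcast : ∑ i ∈ Finset.range (k - 1),
        ((((i : ℝ) + 1) / k) ^ (2 * α + 1) - ((i : ℝ) / k) ^ (2 * α + 1))
        = ∑ i ∈ Finset.range (k - 1),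
          ((((i + 1 : ℕ) : ℝ) / k) ^ (2 * α + 1) - ((i : ℝ) / k) ^ (2 * α + 1)) := by
      apply Finset.sum_congr rfl; intro i _; push_cast; ring
    rw [hcast, Finset.sum_range_sub (fun i => ((i : ℝ) / k) ^ (2 * α + 1))]
    push_cast
    rw [Nat.cast_sub (by omega)]
    push_cast
    simp [Real.zero_rpow (by positivity : 2 * α + 1 ≠ 0)]
  -- sum over Icc = sum over range
  have hIcc : ∑ i ∈ Finset.Icc 1 (k - 1), ((i : ℝ) / k) ^ (2 * α)
      = ∑ i ∈ Finset.range (k - 1), (((i : ℝ) + 1) / k) ^ (2 * α) := by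
    rw [← Finset.Ico_add_one_right_eq_Icc, Finset.sum_Ico_eq_sum_range]
    simp only [Nat.succ_sub_one, Nat.add_sub_cancel]
    exact Finset.sum_congr rfl fun i _ => by push_cast; ring_nf
  have step3 : ((k : ℝ) / (2 * α + 1)) * (((k : ℝ) - 1) / k) ^ (2 * α + 1)
      ≤ ∑ i ∈ Finset.Icc 1 (k - 1), ((i : ℝ) / k) ^ (2 * α) := by
    rw [hIcc, ← htel]
    rw [Finset.mul_sum]
    apply Finset.sum_le_sum
    intro i _
    have := key i
    rw [div_mul_eq_mul_div, div_le_iff₀ hp0]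
    calc (k:ℝ) * ((((i : ℝ) + 1) / k) ^ (2 * α + 1) - ((i : ℝ) / k) ^ (2 * α + 1))
        ≤ (k:ℝ) * ((2 * α + 1) * (((i : ℝ) + 1) / k) ^ (2 * α) / k) :=
          mul_le_mul_of_nonneg_left (key i) hkpos.le
      _ = (((i : ℝ) + 1) / k) ^ (2 * α) * (2 * α + 1) := by field_simp
  -- Bernoulli again: ((k-1)/k)^(2α+1) ≥ 1 - (2α+1)/k
  have hb2 := one_add_mul_self_le_rpow_one_add (s := -(1 / (k : ℝ)))
    (by rw [neg_le, neg_neg]; rw [div_le_one hkpos]; linarith) hp1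
  have heq2 : (1 : ℝ) + -(1 / (k : ℝ)) = ((k : ℝ) - 1) / k := by field_simp; ring
  rw [heq2] at hb2
  have hfin : (k : ℝ) / (2 * α + 1) ≤ 1 + ∑ i ∈ Finset.Icc 1 (k - 1), ((i : ℝ) / k) ^ (2 * α) := by
    have h1 : ((k : ℝ) / (2 * α + 1)) * (1 + (2 * α + 1) * -(1 / (k : ℝ)))
        ≤ ((k : ℝ) / (2 * α + 1)) * (((k : ℝ) - 1) / k) ^ (2 * α + 1) :=
      mul_le_mul_of_nonneg_left hb2 (by positivity)
    have h2 : ((k : ℝ) / (2 * α + 1)) * (1 + (2 * α + 1) * -(1 / (k : ℝ)))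
        = (k : ℝ) / (2 * α + 1) - 1 := by field_simp; ring
    linarith [step3, h1]
  calc (k : ℝ) / (2 * α + 1)
      ≤ 1 + ∑ i ∈ Finset.Icc 1 (k - 1), ((i : ℝ) / k) ^ (2 * α) := hfin
    _ ≤ ∏ i ∈ Finset.Icc 1 (k - 1), (1 + ((i : ℝ) / k) ^ (2 * α)) := step2
    _ < _ := step1
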